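/- Let K be the NEC-type presented group with presentation ⟨x₁,…,x_γ, e, τ₁,…,τ_{r+1} ∣ x₁² = ⋯ = x_γ² = τ₁² = ⋯ = τ_{r+1}² = 1, e⁻¹τ_{r+1}e = τ₁, x_γ⋯x₂x₁e = 1, (τ₁τ₂)^{n₁} = ⋯ = (τ_rτ_{r+1})^{n_r} = 1⟩, let θ : K → C₂ be the homomorphism sending each x_j and each τ_k to a and e to 1, and let Δ̂ = ker θ. Then for every commutative group A, every group homomorphism ζ : Δ̂ → A, and every w ∈ Δ̂, one has ζ(τ₁wτ₁) = ζ(w)⁻¹; that is, conjugation by τ₁ induces the inversion automorphism on the image of ζ. -/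

import Mathlib

/-- Generators of the NEC-type group: `x 0, …, x (γ-1)` (the `x₁,…,x_γ` of the paper),
`e`, and `τ 0, …, τ r` (the reflections `τ₁,…,τ_{r+1}` of the paper). -/
inductive NECGen (γ r : ℕ) : Type
  | x : Fin γ → NECGen γ r
  | e : NECGen γ r
  | τ : Fin (r + 1) → NECGen γ r

/-- The defining relators of the NEC-type group:
`xⱼ² = τₖ² = 1`, `e⁻¹ τ_{r+1} e τ₁⁻¹ = 1`, `x_γ ⋯ x₂ x₁ e = 1`, `(τₖ τ_{k+1})^{nₖ} = 1`. -/
def necRels (γ r : ℕ) (n : Fin r → ℕ) : Set (FreeGroup (NECGen γ r)) :=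
  (Set.range fun j : Fin γ => (FreeGroup.of (NECGen.x j)) ^ 2) ∪
  (Set.range fun k : Fin (r + 1) => (FreeGroup.of (NECGen.τ k)) ^ 2) ∪
  {(FreeGroup.of (NECGen.e : NECGen γ r))⁻¹ * FreeGroup.of (NECGen.τ (Fin.last r)) *
      FreeGroup.of (NECGen.e : NECGen γ r) * (FreeGroup.of (NECGen.τ (0 : Fin (r + 1))))⁻¹} ∪
  {(List.ofFn fun j : Fin γ => FreeGroup.of (NECGen.x j.rev)).prod *
      FreeGroup.of (NECGen.e : NECGen γ r)} ∪
  (Set.range fun k : Fin r =>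
    (FreeGroup.of (NECGen.τ k.castSucc) * FreeGroup.of (NECGen.τ k.succ)) ^ n k)

/-- The NEC-type presented group `K` with signature `(0; +; [2,…,2], {(n₁,…,n_r)})`. -/
abbrev NECGroup (γ r : ℕ) (n : Fin r → ℕ) := PresentedGroup (necRels γ r n)

/-- The generator `x_{j+1}` of `K` (0-indexed). -/
def Kx {γ r : ℕ} {n : Fin r → ℕ} (j : Fin γ) : NECGroup γ r n :=
  PresentedGroup.of (NECGen.x j)

/-- The generator `e` of `K`. -/
def Ke {γ r : ℕ} {n : Fin r → ℕ} : NECGroup γ r n :=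
  PresentedGroup.of NECGen.e

/-- The generator (reflection) `τ_{k+1}` of `K` (0-indexed). -/
def Kτ {γ r : ℕ} {n : Fin r → ℕ} (k : Fin (r + 1)) : NECGroup γ r n :=
  PresentedGroup.of (NECGen.τ k)

/-- The cyclic group `C₂` of order two. -/
abbrev C₂ := Multiplicative (ZMod 2)

/-- The nontrivial element `a` of `C₂`. -/
def C₂a : C₂ := Multiplicative.ofAdd 1

section aux
variable {γ r : ℕ} {n : Fin r → ℕ}

lemma necRel_one {w : FreeGroup (NECGen γ r)} (hw : w ∈ necRels γ r n) :
    PresentedGroup.mk (necRels γ r n) w = 1 :=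
  (QuotientGroup.eq_one_iff w).mpr (Subgroup.subset_normalClosure hw)

lemma Kx_sq (j : Fin γ) : (Kx j : NECGroup γ r n) * Kx j = 1 := by
  have h := necRel_one (γ := γ) (n := n)
    (Set.mem_union_left _ (Set.mem_union_left _ (Set.mem_union_left _
      (Set.mem_union_left _ ⟨j, rfl⟩))))
  rw [map_pow, sq] at h
  exact h

lemma Kτ_sq (k : Fin (r + 1)) : (Kτ k : NECGroup γ r n) * Kτ k = 1 := by
  have h := necRel_one (γ := γ) (n := n)
    (Set.mem_union_left _ (Set.mem_union_left _ (Set.mem_union_left _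
      (Set.mem_union_right _ ⟨k, rfl⟩))))
  rw [map_pow, sq] at h
  exact h

lemma Ke_rel : (List.ofFn fun j : Fin γ => (Kx j.rev : NECGroup γ r n)).prod * Ke = 1 := by
  have h := necRel_one (γ := γ) (n := n)
    (Set.mem_union_left _ (Set.mem_union_right _ rfl))
  rw [map_mul, map_list_prod, List.map_ofFn] at h
  exact h

end aux

/-- With `Δ̂ = ker θ ≤ K`, for every commutative group `A`, every
homomorphism `ζ : Δ̂ → A` and every `w ∈ Δ̂`, one has `ζ(τ₁ w τ₁) = ζ(w)⁻¹`; that is,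
conjugation by `τ₁` induces the inversion automorphism on the image of `ζ`. -/
theorem necGroup_conj_tau_induces_inversion (γ r : ℕ) (hγ : 1 ≤ γ) (hr : 1 ≤ r)
    (n : Fin r → ℕ) (hn : ∀ k, 2 ≤ n k)
    (θ : NECGroup γ r n →* C₂)
    (hθx : ∀ j : Fin γ, θ (Kx j) = C₂a)
    (hθe : θ Ke = 1)
    (hθτ : ∀ k : Fin (r + 1), θ (Kτ k) = C₂a)
    {A : Type*} [CommGroup A] (ζ : θ.ker →* A) :
    ∀ w : NECGroup γ r n, ∀ hw : w ∈ θ.ker,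
      ∀ hw' : Kτ (0 : Fin (r + 1)) * w * Kτ (0 : Fin (r + 1)) ∈ θ.ker,
        ζ ⟨Kτ (0 : Fin (r + 1)) * w * Kτ (0 : Fin (r + 1)), hw'⟩ = (ζ ⟨w, hw⟩)⁻¹ := by
  classical
  set t : NECGroup γ r n := Kτ (0 : Fin (r + 1)) with htdef
  have ht : t * t = 1 := Kτ_sq 0
  have htinv : t⁻¹ = t := inv_eq_of_mul_eq_one_right ht
  have hxinv : ∀ j : Fin γ, (Kx j : NECGroup γ r n)⁻¹ = Kx j :=
    fun j => inv_eq_of_mul_eq_one_right (Kx_sq j)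
  have hτinv : ∀ k : Fin (r + 1), (Kτ k : NECGroup γ r n)⁻¹ = Kτ k :=
    fun k => inv_eq_of_mul_eq_one_right (Kτ_sq k)
  have hθt : θ t = C₂a := hθτ 0
  have haa : C₂a * C₂a = 1 := by decide
  have hane : C₂a ≠ 1 := by decide
  set T : Set (NECGroup γ r n) :=
    (Set.range fun j : Fin γ => Kx j * t) ∪ (Set.range fun k : Fin (r + 1) => Kτ k * t)
    with hTdef
  set H : Subgroup (NECGroup γ r n) := Subgroup.closure T with hHdef
  -- θ vanishes on H
  have hHker : ∀ h ∈ H, θ h = 1 := by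
    intro h hh
    induction hh using Subgroup.closure_induction with
    | mem g hg =>
      rcases hg with ⟨j, rfl⟩ | ⟨k, rfl⟩ <;> simp [map_mul, hθx, hθτ, hθt, haa]
    | one => exact map_one θ
    | mul x y _ _ hx hy => rw [map_mul, hx, hy, one_mul]
    | inv x _ hx => rw [map_inv, hx, inv_one]
  -- conjugation by t sends each generator to its inverse
  have hgen_conj : ∀ g ∈ T, t * g * t = g⁻¹ := by
    rintro g (⟨j, rfl⟩ | ⟨k, rfl⟩)
    · calc t * (Kx j * t) * t = t * Kx j * (t * t) := by group
        _ = t * Kx j := by rw [ht, mul_one]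
        _ = (Kx j * t)⁻¹ := by rw [mul_inv_rev, htinv, hxinv]
    · calc t * (Kτ k * t) * t = t * Kτ k * (t * t) := by group
        _ = t * Kτ k := by rw [ht, mul_one]
        _ = (Kτ k * t)⁻¹ := by rw [mul_inv_rev, htinv, hτinv]
  -- H is stable under conjugation by t
  have hsplit : ∀ a b : NECGroup γ r n, (t * a * t) * (t * b * t) = t * (a * b) * t := by
    intro a b
    rw [show (t * a * t) * (t * b * t) = t * a * (t * t) * (b * t) from by group, ht]
    group
  have hHconj : ∀ h ∈ H, t * h * t ∈ H := by
    intro h hh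
    induction hh using Subgroup.closure_induction with
    | mem g hg => rw [hgen_conj g hg]; exact H.inv_mem (Subgroup.subset_closure hg)
    | one => rw [mul_one, ht]; exact H.one_mem
    | mul x y _ _ hx hy => rw [← hsplit]; exact H.mul_mem hx hy
    | inv x _ hx =>
      rw [show t * x⁻¹ * t = (t * x * t)⁻¹ from by
        simp [mul_inv_rev, htinv, mul_assoc]]
      exact H.inv_mem hx
  -- closure property C
  have Cmul : ∀ u v : NECGroup γ r n, (u ∈ H ∨ u * t ∈ H) → (v ∈ H ∨ v * t ∈ H) →
      (u * v ∈ H ∨ u * v * t ∈ H) := by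
    rintro u v (hu | hu) (hv | hv)
    · exact Or.inl (H.mul_mem hu hv)
    · exact Or.inr (by rw [mul_assoc]; exact H.mul_mem hu hv)
    · refine Or.inr ?_
      rw [show u * v * t = (u * t) * (t * v * t) from by
        rw [show (u * t) * (t * v * t) = u * (t * t) * (v * t) from by group, ht]; group]
      exact H.mul_mem hu (hHconj v hv)
    · refine Or.inl ?_
      rw [show u * v = (u * t) * (t * (v * t) * t) from by
        rw [show (u * t) * (t * (v * t) * t) = u * (t * t) * v * (t * t) from by group, ht]
        group]
      exact H.mul_mem hu (hHconj (v * t) hv)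
  have Cinv : ∀ u : NECGroup γ r n, (u ∈ H ∨ u * t ∈ H) → (u⁻¹ ∈ H ∨ u⁻¹ * t ∈ H) := by
    rintro u (hu | hu)
    · exact Or.inl (H.inv_mem hu)
    · refine Or.inr ?_
      rw [show u⁻¹ * t = t * (u * t)⁻¹ * t from by group]
      exact hHconj _ (H.inv_mem hu)
  -- every element of K is in H or H·t
  have hCov : ∀ w : NECGroup γ r n, w ∈ H ∨ w * t ∈ H := by
    have hlist : ∀ l : List (NECGroup γ r n), (∀ g ∈ l, g ∈ H ∨ g * t ∈ H) →
        (l.prod ∈ H ∨ l.prod * t ∈ H) := by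
      intro l
      induction l with
      | nil => intro _; left; rw [List.prod_nil]; exact H.one_mem
      | cons a l ih =>
        intro h
        rw [List.prod_cons]
        exact Cmul a l.prod (h a (by simp)) (ih fun g hg => h g (by simp [hg]))
    have hKe : (Ke : NECGroup γ r n) ∈ H ∨ Ke * t ∈ H := by
      have hprod : (List.ofFn fun j : Fin γ => (Kx j.rev : NECGroup γ r n)).prod ∈ H ∨
          (List.ofFn fun j : Fin γ => (Kx j.rev : NECGroup γ r n)).prod * t ∈ H := by
        refine hlist _ ?_
        intro g hg
        rw [List.mem_ofFn] at hg
        obtain ⟨j, rfl⟩ := hg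
        exact Or.inr (Subgroup.subset_closure (Or.inl ⟨j.rev, rfl⟩))
      have he : (Ke : NECGroup γ r n) =
          ((List.ofFn fun j : Fin γ => (Kx j.rev : NECGroup γ r n)).prod)⁻¹ :=
        (inv_eq_of_mul_eq_one_right Ke_rel).symm
      rw [he]
      exact Cinv _ hprod
    intro w
    induction w using PresentedGroup.induction_on with
    | H z =>
      induction z using FreeGroup.induction_on with
      | C1 => left; rw [map_one]; exact H.one_mem
      | of a =>
        cases a with
        | x j => exact Or.inr (Subgroup.subset_closure (Or.inl ⟨j, rfl⟩))
        | e => exact hKe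
        | τ k => exact Or.inr (Subgroup.subset_closure (Or.inr ⟨k, rfl⟩))
      | inv_of a ha => rw [map_inv]; exact Cinv _ ha
      | mul u v hu hv => rw [map_mul]; exact Cmul _ _ hu hv
  -- kernel elements lie in H
  have hkerH : ∀ w : NECGroup γ r n, θ w = 1 → w ∈ H := by
    intro w hw
    rcases hCov w with h | h
    · exact h
    · exfalso
      have h1 : θ (w * t) = 1 := hHker _ h
      rw [map_mul, hw, one_mul, hθt] at h1
      exact hane h1
  -- the main computation
  intro w hw hw'
  have hwH : w ∈ H := hkerH w (MonoidHom.mem_ker.mp hw)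
  revert hw hw'
  induction hwH using Subgroup.closure_induction with
  | mem g hg =>
    intro h1 h2
    have hc := hgen_conj g hg
    have : (⟨t * g * t, h2⟩ : θ.ker) = (⟨g, h1⟩ : θ.ker)⁻¹ := Subtype.ext (by simp [hc])
    rw [this, map_inv]
  | one =>
    intro h1 h2
    have e1 : (⟨t * 1 * t, h2⟩ : θ.ker) = 1 := Subtype.ext (by simp [ht])
    have e2 : (⟨(1 : NECGroup γ r n), h1⟩ : θ.ker) = 1 := Subtype.ext rfl
    rw [e1, e2, map_one, inv_one]
  | mul x y hxH hyH ihx ihy =>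
    intro h1 h2
    have hx1 : x ∈ θ.ker := MonoidHom.mem_ker.mpr (hHker x hxH)
    have hy1 : y ∈ θ.ker := MonoidHom.mem_ker.mpr (hHker y hyH)
    have m1 : t * x * t ∈ θ.ker := by
      simp [MonoidHom.mem_ker, map_mul, hθt, hHker x hxH, haa]
    have m2 : t * y * t ∈ θ.ker := by
      simp [MonoidHom.mem_ker, map_mul, hθt, hHker y hyH, haa]
    have key : (⟨t * (x * y) * t, h2⟩ : θ.ker) = ⟨t * x * t, m1⟩ * ⟨t * y * t, m2⟩ :=
      Subtype.ext (by simp [← hsplit])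
    have key2 : (⟨x * y, h1⟩ : θ.ker) = ⟨x, hx1⟩ * ⟨y, hy1⟩ := Subtype.ext rfl
    rw [key, key2, map_mul, map_mul, ihx hx1 m1, ihy hy1 m2, mul_inv]
  | inv x hxH ihx =>
    intro h1 h2
    have hx1 : x ∈ θ.ker := MonoidHom.mem_ker.mpr (hHker x hxH)
    have m1 : t * x * t ∈ θ.ker := by
      simp [MonoidHom.mem_ker, map_mul, hθt, hHker x hxH, haa]
    have key : (⟨t * x⁻¹ * t, h2⟩ : θ.ker) = (⟨t * x * t, m1⟩ : θ.ker)⁻¹ :=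
      Subtype.ext (by simp [mul_inv_rev, htinv, mul_assoc])
    have key2 : (⟨x⁻¹, h1⟩ : θ.ker) = (⟨x, hx1⟩ : θ.ker)⁻¹ := Subtype.ext rfl
    rw [key, key2, map_inv, map_inv, ihx hx1 m1]
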